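/- In the zero-bracket condition 2r₁³(μ₁−μ₂)(μ₃−μ₂) − r₂³(2μ₂+μ₁)(2μ₃+μ₂) = 0 with μ₁ = μ₃ = μ₀ > 0 and 0 < r₁ < r₂, any real solution μ₂ must be negative. -/

import Mathlib

/-- For the matching condition 2r₁³(μ₁−μ₂)(μ₃−μ₂) − r₂³(2μ₂+μ₁)(2μ₀+μ₂) = 0 with
μ₁ = μ₃ = μ₀ > 0 and 0 < r₁ < r₂, any real solution μ₂ is negative. -/
theorem stmt_13 (μ₀ r₁ r₂ μ₂ : ℝ) (hμ₀ : 0 < μ₀) (hr₁ : 0 < r₁) (hr : r₁ < r₂)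
    (heq : 2 * r₁ ^ 3 * (μ₀ - μ₂) * (μ₀ - μ₂)
      - r₂ ^ 3 * (2 * μ₂ + μ₀) * (2 * μ₀ + μ₂) = 0) :
    μ₂ < 0 := by
  by_contra h
  push_neg at h
  have h1 : r₁ ^ 3 < r₂ ^ 3 := by
    exact pow_lt_pow_left₀ hr hr₁.le (by norm_num)
  have h2 : (0:ℝ) < r₂ ^ 3 := lt_trans (pow_pos hr₁ 3) h1
  rcases h.eq_or_lt with h0 | h0
  · subst_vars
    nlinarith [mul_pos (pow_pos hr₁ 3) (mul_pos hμ₀ hμ₀)]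
  · nlinarith [mul_nonneg (sub_nonneg.mpr h1.le) (sq_nonneg (μ₀ - μ₂)),
      mul_pos h2 (mul_pos hμ₀ h0)]
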